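/- For θ ∈ ℝ let A_θ be the 3×3 complex matrix with entries (A_θ)₁₁ = cos²θ, (A_θ)₁₂ = −i·cosθ·sinθ, (A_θ)₂₁ = i·cosθ·sinθ, (A_θ)₂₂ = sin²θ, and all other entries 0. Then for every vector v ∈ ℂ³ with Σ_i |v_i|² = 1 there exist a real 3×3 matrix G with G·Gᵀ = 1 and det G = 1, and an angle θ ∈ [0, π/4], such that the rank-one matrix v v† (with entries v_i · conj(v_j)) equals G · A_θ · Gᵀ, where G is regarded as a complex matrix via its real entries. -/

import Mathlib

open Matrix
open scoped RealInnerProductSpace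

/-- The normal-form GKS matrix `A_θ`. -/
noncomputable def Atheta (θ : ℝ) : Matrix (Fin 3) (Fin 3) ℂ :=
  !![((Real.cos θ : ℂ)) ^ 2, -Complex.I * Real.cos θ * Real.sin θ, 0;
     Complex.I * Real.cos θ * Real.sin θ, ((Real.sin θ : ℂ)) ^ 2, 0;
     0, 0, 0]

/-- Any vector in `ℝ³` admits a unit vector orthogonal to it. -/
lemma exists_unit_orthogonal (a : Fin 3 → ℝ) :
    ∃ b : Fin 3 → ℝ, (∑ i, b i * b i) = 1 ∧ (∑ i, a i * b i) = 0 := by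
  classical
  let a' : EuclideanSpace ℝ (Fin 3) := WithLp.toLp 2 a
  have hinner : ∀ x y : EuclideanSpace ℝ (Fin 3), ⟪x, y⟫ = ∑ i, x i * y i := by
    intro x y
    simp [PiLp.inner_apply, RCLike.inner_apply, mul_comm]
  have hK : (((ℝ ∙ a')ᗮ : Submodule ℝ (EuclideanSpace ℝ (Fin 3)))) ≠ ⊥ := by
    have h2 := Submodule.finrank_add_finrank_orthogonal (K := (ℝ ∙ a'))
    have h3 : Module.finrank ℝ (EuclideanSpace ℝ (Fin 3)) = 3 := by
      simp [finrank_euclideanSpace_fin]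
    have h1 : Module.finrank ℝ (ℝ ∙ a' : Submodule ℝ (EuclideanSpace ℝ (Fin 3))) ≤ 1 := by
      simpa using finrank_span_le_card ({a'} : Set (EuclideanSpace ℝ (Fin 3)))
    intro hbot
    rw [hbot, finrank_bot] at h2
    omega
  obtain ⟨w, hw, hw0⟩ := Submodule.exists_mem_ne_zero_of_ne_bot hK
  have hwa : ⟪a', w⟫ = 0 :=
    (Submodule.mem_orthogonal _ _).mp hw a' (Submodule.mem_span_singleton_self a')
  have hwn : ‖w‖ ≠ 0 := norm_ne_zero_iff.mpr hw0
  refine ⟨(‖w‖⁻¹ : ℝ) • w, ?_, ?_⟩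
  · have : ⟪(‖w‖⁻¹ : ℝ) • w, (‖w‖⁻¹ : ℝ) • w⟫ = 1 := by
      rw [real_inner_smul_left, real_inner_smul_right, real_inner_self_eq_norm_sq]
      field_simp
    exact (hinner _ _).symm.trans this
  · have : ⟪a', (‖w‖⁻¹ : ℝ) • w⟫ = 0 := by
      rw [real_inner_smul_right, hwa, mul_zero]
    exact (hinner _ _).symm.trans this

/-- Every rank-one matrix `v v†` with `v` a unit vector in `ℂ³` can be brought to the
normal form `A_θ`, `θ ∈ [0, π/4]`, by conjugation with a rotation `G ∈ SO(3)`. -/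
theorem rankOne_eq_rotation_conj_normal_form (v : Fin 3 → ℂ)
    (hv : ∑ i, ‖v i‖ ^ 2 = 1) :
    ∃ (G : Matrix (Fin 3) (Fin 3) ℝ) (θ : ℝ), G * Gᵀ = 1 ∧ G.det = 1 ∧
      θ ∈ Set.Icc 0 (Real.pi / 4) ∧
      Matrix.vecMulVec v (star v) =
        (G.map Complex.ofReal) * Atheta θ * (G.map Complex.ofReal)ᵀ := by
  classical
  set S : ℂ := ∑ i, v i ^ 2 with hS
  obtain ⟨z, hz1, hzS⟩ : ∃ z : ℂ, ‖z‖ = 1 ∧ z ^ 2 * S = (‖S‖ : ℂ) := by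
    by_cases h0 : S = 0
    · exact ⟨1, by simp, by simp [h0]⟩
    · obtain ⟨z, hz⟩ := IsAlgClosed.exists_pow_nat_eq ((‖S‖ : ℂ) / S) (n := 2)
        (by norm_num)
    
      have habs2 : ‖z‖ ^ 2 = 1 := by
        have h := congrArg (‖·‖) hz
        rw [norm_pow, norm_div, Complex.norm_real, Real.norm_of_nonneg (norm_nonneg S)] at h
        rw [h, div_self (by simpa using h0)]
      have habs : ‖z‖ = 1 := by
        nlinarith [norm_nonneg z]
      refine ⟨z, habs, ?_⟩
      rw [hz, div_mul_cancel₀ _ h0]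
  set u : Fin 3 → ℂ := fun i => z * v i with hu
  set x : Fin 3 → ℝ := fun i => (u i).re with hx
  set y : Fin 3 → ℝ := fun i => (u i).im with hy
  have hzz : z * (starRingEnd ℂ) z = 1 := by
    rw [Complex.mul_conj, Complex.normSq_eq_norm_sq, hz1]
    norm_num
  have key : ∀ i j, v i * (starRingEnd ℂ) (v j) = u i * (starRingEnd ℂ) (u j) := by
    intro i j
    have h : u i * (starRingEnd ℂ) (u j)
        = (z * (starRingEnd ℂ) z) * (v i * (starRingEnd ℂ) (v j)) := by
      show z * v i * (starRingEnd ℂ) (z * v j) = _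
      rw [_root_.map_mul]; ring
    rw [h, hzz, one_mul]
  have habs : ∀ i, ‖u i‖ = ‖v i‖ := by
    intro i
    show ‖z * v i‖ = _
    rw [norm_mul, hz1, one_mul]
  have hsum : ∑ i, (x i ^ 2 + y i ^ 2) = 1 := by
    have h : ∀ i, x i ^ 2 + y i ^ 2 = ‖v i‖ ^ 2 := by
      intro i
      rw [← habs i, Complex.sq_norm, Complex.normSq_apply]
      simp [hx, hy]
      ring
    rw [Finset.sum_congr rfl fun i _ => h i, hv]
  have hSsum : ∑ i, u i ^ 2 = (‖S‖ : ℂ) := by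
    have : ∀ i, u i ^ 2 = z ^ 2 * v i ^ 2 := fun i => by
      show (z * v i) ^ 2 = _; ring
    rw [Finset.sum_congr rfl fun i _ => this i, ← Finset.mul_sum, ← hS, hzS]
  have hre : ∑ i, (x i ^ 2 - y i ^ 2) = ‖S‖ := by
    have h := congrArg Complex.re hSsum
    rw [Complex.re_sum, Complex.ofReal_re] at h
    rw [← h]
    refine Finset.sum_congr rfl fun i _ => ?_
    simp [hx, hy, pow_two, Complex.mul_re]
  have him : ∑ i, x i * y i = 0 := by
    have h := congrArg Complex.im hSsum
    rw [Complex.im_sum, Complex.ofReal_im] at h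
    have h2 : ∑ i, 2 * (x i * y i) = 0 := by
      rw [← h]
      refine Finset.sum_congr rfl fun i _ => ?_
      simp [hx, hy, pow_two, Complex.mul_im]
      ring
    rw [← Finset.mul_sum] at h2
    linarith
  set sx : ℝ := ∑ i, x i ^ 2 with hsx
  set sy : ℝ := ∑ i, y i ^ 2 with hsy
  have hsy0 : 0 ≤ sy := Finset.sum_nonneg fun i _ => sq_nonneg _
  have hsxsy : sx + sy = 1 := by
    rw [hsx, hsy, ← Finset.sum_add_distrib]; exact hsum
  have hdiff : sx - sy = ‖S‖ := by
    rw [hsx, hsy, ← Finset.sum_sub_distrib]; exact hre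
  have hdiff0 : 0 ≤ sx - sy := by rw [hdiff]; exact norm_nonneg S
  have hsy2 : sy ≤ 1 / 2 := by linarith
  have hsx2 : (1 : ℝ) / 2 ≤ sx := by linarith
  set s : ℝ := Real.sqrt sy with hs
  set c : ℝ := Real.sqrt sx with hcdef
  set θ : ℝ := Real.arcsin s with hθ
  have hs1 : s ≤ 1 := by
    rw [hs, show (1:ℝ) = Real.sqrt 1 by simp]
    exact Real.sqrt_le_sqrt (by linarith)
  have hsnn : 0 ≤ s := Real.sqrt_nonneg _
  have hsin : Real.sin θ = s := Real.sin_arcsin (by linarith) hs1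
  have hcos : Real.cos θ = c := by
    rw [hθ, Real.cos_arcsin, hs, Real.sq_sqrt hsy0, hcdef, show 1 - sy = sx by linarith]
  have hθ0 : 0 ≤ θ := Real.arcsin_nonneg.mpr hsnn
  have hθpi : θ ≤ Real.pi / 4 := by
    have hpi : 0 < Real.pi := Real.pi_pos
    have h4 : Real.arcsin (Real.sin (Real.pi / 4)) = Real.pi / 4 :=
      Real.arcsin_sin (by linarith) (by linarith)
    have hhalf : Real.sqrt 2 / 2 = Real.sqrt (1/2) := by
      rw [show (1:ℝ)/2 = (Real.sqrt 2 / 2)^2 by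
        rw [div_pow, Real.sq_sqrt (by norm_num : (0:ℝ) ≤ 2)]; norm_num]
      rw [Real.sqrt_sq (by positivity)]
    have hle : s ≤ Real.sin (Real.pi / 4) := by
      rw [Real.sin_pi_div_four, hhalf, hs]
      exact Real.sqrt_le_sqrt hsy2
    calc θ ≤ Real.arcsin (Real.sin (Real.pi/4)) := Real.monotone_arcsin hle
      _ = Real.pi / 4 := h4
  have hc2 : c ^ 2 = sx := Real.sq_sqrt (by linarith)
  have hs2 : s ^ 2 = sy := Real.sq_sqrt hsy0
  have hc0 : 0 < c := Real.sqrt_pos.mpr (by linarith)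
  have hcne : c ≠ 0 := ne_of_gt hc0
  set a : Fin 3 → ℝ := fun i => x i / c with ha
  have hxa : ∀ i, x i = c * a i := by
    intro i; rw [ha]; field_simp
  have haa : ∑ i, a i * a i = 1 := by
    have h : ∑ i, a i * a i = sx / c ^ 2 := by
      rw [hsx, Finset.sum_div]
      refine Finset.sum_congr rfl fun i _ => ?_
      rw [ha]; field_simp
      try ring
    rw [h, hc2, div_self (by linarith)]
  obtain ⟨b, hbb, hab, hyb⟩ :
      ∃ b : Fin 3 → ℝ, (∑ i, b i * b i) = 1 ∧ (∑ i, a i * b i) = 0 ∧ ∀ i, y i = s * b i := by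
    by_cases h0 : sy = 0
    · obtain ⟨b, hbb, hab⟩ := exists_unit_orthogonal a
      have hy0 : ∀ i, y i = 0 := by
        intro i
        have h := (Finset.sum_eq_zero_iff_of_nonneg
            (fun i _ => sq_nonneg (y i))).mp (by rw [← hsy, h0]) i (Finset.mem_univ i)
        exact pow_eq_zero_iff (two_ne_zero) |>.mp h
      have hs0 : s = 0 := by rw [hs, h0, Real.sqrt_zero]
      exact ⟨b, hbb, hab, fun i => by rw [hy0 i, hs0, zero_mul]⟩
    · have hspos : 0 < s := Real.sqrt_pos.mpr (lt_of_le_of_ne hsy0 (Ne.symm h0))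
      have hsne : s ≠ 0 := ne_of_gt hspos
      refine ⟨fun i => y i / s, ?_, ?_, fun i => by field_simp⟩
      · have h : ∑ i, (y i / s) * (y i / s) = sy / s ^ 2 := by
          rw [hsy, Finset.sum_div]
          refine Finset.sum_congr rfl fun i _ => ?_
          field_simp
          try ring
        rw [h, hs2, div_self (by positivity)]
      · have h : ∀ i, a i * (y i / s) = (x i * y i) / (c * s) := by
          intro i; rw [ha]; field_simp
          try ring
        rw [Finset.sum_congr rfl fun i _ => h i, ← Finset.sum_div, him, zero_div]
  have hui : ∀ i, u i = (↑(c * a i) + ↑(s * b i) * Complex.I : ℂ) := by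
    intro i
    have h1 : (u i).re = x i := by rw [hx]
    have h2 : (u i).im = y i := by rw [hy]
    rw [← Complex.re_add_im (u i), h1, h2, hxa i, hyb i]
  clear_value S u x y sx sy θ s c a
  have ea : a 0 * a 0 + a 1 * a 1 + a 2 * a 2 = 1 := by
    simpa [Fin.sum_univ_three] using haa
  have eb : b 0 * b 0 + b 1 * b 1 + b 2 * b 2 = 1 := by
    simpa [Fin.sum_univ_three] using hbb
  have eab : a 0 * b 0 + a 1 * b 1 + a 2 * b 2 = 0 := by
    simpa [Fin.sum_univ_three] using hab
  set R : Matrix (Fin 3) (Fin 3) ℝ :=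
    !![a 0, a 1, a 2; b 0, b 1, b 2;
       a 1 * b 2 - a 2 * b 1, a 2 * b 0 - a 0 * b 2, a 0 * b 1 - a 1 * b 0] with hR
  have hRRT : R * Rᵀ = 1 := by
    ext i j
    fin_cases i <;> fin_cases j <;>
      simp [hR, Matrix.mul_apply, Fin.sum_univ_three, Matrix.one_apply, Matrix.vecHead,
        Matrix.vecTail] <;>
      first
        | linear_combination ea
        | linear_combination eb
        | linear_combination eab
        | linear_combination (b 0 * b 0 + b 1 * b 1 + b 2 * b 2) * ea + eb -
            (a 0 * b 0 + a 1 * b 1 + a 2 * b 2) * eab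
        | ring
  have hdet : R.det = 1 := by
    rw [Matrix.det_fin_three]
    simp [hR]
    linear_combination (b 0 * b 0 + b 1 * b 1 + b 2 * b 2) * ea + eb -
      (a 0 * b 0 + a 1 * b 1 + a 2 * b 2) * eab
  refine ⟨Rᵀ, θ, ?_, ?_, ⟨hθ0, hθpi⟩, ?_⟩
  · rw [Matrix.transpose_transpose]
    exact mul_eq_one_comm.mp hRRT
  · rw [Matrix.det_transpose]
    exact hdet
  · ext i j
    rw [Matrix.vecMulVec_apply]
    have hstar : (star v) j = (starRingEnd ℂ) (v j) := rfl
    rw [hstar, key i j, hui i, hui j]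
    fin_cases i <;> fin_cases j <;>
      · simp [Atheta, Matrix.vecHead, Matrix.vecTail, Matrix.mul_apply, Fin.sum_univ_three,
          Matrix.map_apply, Matrix.transpose_apply, hR, hcos, hsin, map_add, _root_.map_mul,
          Complex.conj_ofReal, Complex.conj_I]
        apply Complex.ext <;>
          simp only [Complex.add_re, Complex.add_im, Complex.mul_re, Complex.mul_im,
            Complex.ofReal_re, Complex.ofReal_im, Complex.I_re, Complex.I_im, Complex.neg_re,
            Complex.neg_im, Complex.zero_re, Complex.zero_im,
            ← Complex.ofReal_pow, mul_zero, zero_mul, sub_zero, zero_sub, add_zero, zero_add,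
            neg_zero, neg_neg, Complex.ofReal_mul, Complex.ofReal_sub] <;>
          ring
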